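/- For real s > 1, the Laplace transform of the fractional-part function r(x) = e^x - ⌊e^x⌋ satisfies R(s) = ∫_0^∞ r(x) e^{-sx} dx = 1/(s-1) - ζ(s)/s. -/

import Mathlib

open Real MeasureTheory Set Filter

private theorem myderiv7 (c : ℝ) (hc : c ≠ 0) (x : ℝ) :
    HasDerivAt (fun y => -Real.exp (-c*y)/c) (Real.exp (-c*x)) x := by
  have h1 : HasDerivAt (fun y : ℝ => -c*y) (-c) x := by
    simpa using (hasDerivAt_id x).const_mul (-c)
  have h2 := (Real.hasDerivAt_exp (-c*x)).comp x h1
  have h3 := h2.neg.div_const c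
  refine h3.congr_deriv ?_
  field_simp

private theorem myI1_7 (s : ℝ) (hs : 1 < s) :
    ∫ x in Ioi (0:ℝ), Real.exp (-(s-1)*x) = 1/(s-1) := by
  have hs1 : (0:ℝ) < s - 1 := by linarith
  have htend : Tendsto (fun y => -Real.exp (-(s-1)*y)/(s-1)) atTop (nhds 0) := by
    have h0 : Tendsto (fun y : ℝ => -(s-1)*y) atTop atBot :=
      tendsto_id.const_mul_atTop_of_neg (by linarith)
    have := (Real.tendsto_exp_atBot.comp h0).neg.div_const (s-1)
    simpa using this
  have := integral_Ioi_of_hasDerivAt_of_tendsto'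
    (fun x _ => myderiv7 (s-1) (ne_of_gt hs1) x)
    (exp_neg_integrableOn_Ioi 0 hs1) htend
  rw [this]; simp; field_simp

private theorem myIco_7 (s a b : ℝ) (hs : 0 < s) (hab : a ≤ b) :
    ∫ x in Ico a b, Real.exp (-s*x) = (Real.exp (-s*a) - Real.exp (-s*b))/s := by
  rw [integral_Ico_eq_integral_Ioo, ← integral_Ioc_eq_integral_Ioo,
    ← intervalIntegral.integral_of_le hab]
  have hii : IntervalIntegrable (fun x => Real.exp (-s*x)) volume a b :=
    (Real.continuous_exp.comp (continuous_const.mul continuous_id)).intervalIntegrable a b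
  rw [intervalIntegral.integral_eq_sub_of_hasDerivAt
    (fun x _ => myderiv7 s (ne_of_gt hs) x) hii]
  ring

private theorem myfloor_7 (n : ℕ) (x : ℝ)
    (hx : x ∈ Ico (Real.log (n+1)) (Real.log (n+2))) :
    ⌊Real.exp x⌋ = (n:ℤ) + 1 := by
  obtain ⟨h1, h2⟩ := hx
  have hp1 : (0:ℝ) < (n:ℝ)+1 := by positivity
  have hl : ((n:ℝ)+1) ≤ Real.exp x := by
    rwa [← Real.exp_log hp1, Real.exp_le_exp]
  have hu : Real.exp x < (n:ℝ)+2 := by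
    have hp2 : (0:ℝ) < (n:ℝ)+2 := by positivity
    rwa [← Real.exp_log hp2, Real.exp_lt_exp]
  rw [Int.floor_eq_iff]
  constructor <;> push_cast <;> [exact hl; linarith]

private theorem myUnion_7 :
    (⋃ n : ℕ, Ico (Real.log (n+1)) (Real.log (n+2))) = Ici (0:ℝ) := by
  ext x
  simp only [mem_iUnion, mem_Ico, mem_Ici]
  constructor
  · rintro ⟨n, h1, -⟩
    have : (0:ℝ) ≤ Real.log (n+1) := Real.log_nonneg (by linarith)
    linarith
  · intro hx
    have he1 : (1:ℝ) ≤ Real.exp x := by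
      rw [← Real.exp_zero]; exact Real.exp_le_exp.2 hx
    have hm1 : 1 ≤ ⌊Real.exp x⌋ := by
      rwa [Int.le_floor, Int.cast_one]
    refine ⟨⌊Real.exp x⌋.toNat - 1, ?_, ?_⟩
    · have hcast : ((⌊Real.exp x⌋.toNat - 1 : ℕ) : ℝ) + 1 = (⌊Real.exp x⌋ : ℝ) := by
        have h1 : 1 ≤ ⌊Real.exp x⌋.toNat := by omega
        push_cast [Nat.cast_sub h1]
        have : (⌊Real.exp x⌋.toNat : ℝ) = (⌊Real.exp x⌋ : ℝ) := by
          exact_mod_cast congrArg Int.cast (Int.toNat_of_nonneg (by omega))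
        linarith
      rw [hcast]
      have hfl : (⌊Real.exp x⌋ : ℝ) ≤ Real.exp x := Int.floor_le _
      calc Real.log (⌊Real.exp x⌋ : ℝ) ≤ Real.log (Real.exp x) :=
            Real.log_le_log (by exact_mod_cast hm1.trans_lt' (by norm_num)) hfl
        _ = x := Real.log_exp x
    · have hcast : ((⌊Real.exp x⌋.toNat - 1 : ℕ) : ℝ) + 2 = (⌊Real.exp x⌋ : ℝ) + 1 := by
        have h1 : 1 ≤ ⌊Real.exp x⌋.toNat := by omega
        push_cast [Nat.cast_sub h1]
        have : (⌊Real.exp x⌋.toNat : ℝ) = (⌊Real.exp x⌋ : ℝ) := by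
          exact_mod_cast congrArg Int.cast (Int.toNat_of_nonneg (by omega))
        linarith
      rw [hcast]
      have : Real.exp x < (⌊Real.exp x⌋ : ℝ) + 1 := Int.lt_floor_add_one _
      calc x = Real.log (Real.exp x) := (Real.log_exp x).symm
        _ < Real.log ((⌊Real.exp x⌋ : ℝ) + 1) := Real.log_lt_log (Real.exp_pos x) this

private theorem myDisj_7 :
    Pairwise (Function.onFun Disjoint fun n : ℕ => Ico (Real.log (n+1)) (Real.log (n+2))) := by
  have hmono : Monotone (fun n : ℕ => Real.log (n+1)) := by
    intro i j hij
    apply Real.log_le_log (by positivity)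
    exact_mod_cast add_le_add_left (Nat.cast_le.2 hij) 1
  have := hmono.pairwise_disjoint_on_Ico_succ
  simpa [Order.succ_eq_add_one, Function.onFun,
    show ∀ n:ℕ, ((n:ℝ)+1+1) = (n:ℝ)+2 from fun n => by ring] using this

private theorem mysum_7 (s : ℝ) (hs : 1 < s) :
    HasSum (fun n : ℕ => ((n:ℝ)+1) * ((((n:ℝ)+1))^(-s) - (((n:ℝ)+2))^(-s)) / s)
      ((∑' n : ℕ, ((n + 1 : ℕ) : ℝ) ^ (-s)) / s) := by
  set a : ℕ → ℝ := fun n => ((n + 1 : ℕ) : ℝ) ^ (-s) with ha_def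
  set b : ℕ → ℝ := fun n => ((n:ℝ)+1) ^ (1-s) with hb_def
  have ha : Summable a := (summable_nat_add_iff 1).2 (Real.summable_nat_rpow.mpr (by linarith))
  have ha0 : a 0 = 1 := by simp [ha_def]
  have hZ : HasSum a (∑' n, a n) := ha.hasSum
  have h2 : HasSum (fun n => a (n+1)) ((∑' n, a n) - 1) := by
    apply (hasSum_nat_add_iff 1).2
    simpa [ha0] using hZ
  have hbmono : ∀ n : ℕ, b (n+1) ≤ b n := by
    intro n
    apply Real.rpow_le_rpow_of_nonpos (by positivity) (by push_cast; linarith) (by linarith)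
  have hbnn : ∀ n, 0 ≤ b n := fun n => Real.rpow_nonneg (by positivity) _
  have hps : ∀ n, ∑ i ∈ Finset.range n, (b i - b (i+1)) = b 0 - b n :=
    fun n => Finset.sum_range_sub' b n
  have hsummable : Summable (fun n => b n - b (n+1)) := by
    apply summable_of_sum_range_le (c := b 0) (fun n => sub_nonneg.2 (hbmono n))
    intro n
    rw [hps]
    linarith [hbnn n]
  have hb0 : b 0 = 1 := by simp [hb_def]
  have hbt : Tendsto b atTop (nhds 0) := by
    have h1 : Tendsto (fun n : ℕ => (n:ℝ)+1) atTop atTop :=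
      tendsto_atTop_add_const_right atTop 1 tendsto_natCast_atTop_atTop
    have h2 := (tendsto_rpow_neg_atTop (y := s-1) (by linarith)).comp h1
    simp only [hb_def]
    simpa [Function.comp_def, neg_sub] using h2
  have h3 : HasSum (fun n => b n - b (n+1)) 1 := by
    have ht : Tendsto (fun n => ∑ i ∈ Finset.range n, (b i - b (i+1))) atTop (nhds 1) := by
      simp_rw [hps, hb0]
      simpa using tendsto_const_nhds.sub hbt
    have h4 := hsummable.hasSum
    rwa [tendsto_nhds_unique h4.tendsto_sum_nat ht] at h4
  have hfinal := (h3.add h2).div_const s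
  have heq : (fun n => ((b n - b (n+1)) + a (n+1)) / s)
      = fun n : ℕ => ((n:ℝ)+1) * ((((n:ℝ)+1))^(-s) - (((n:ℝ)+2))^(-s)) / s := by
    funext n
    have hx1 : (0:ℝ) < (n:ℝ)+1 := by positivity
    have hx2 : (0:ℝ) < (n:ℝ)+2 := by positivity
    have e1 : b n = ((n:ℝ)+1) * (((n:ℝ)+1))^(-s) := by
      simp only [hb_def]
      rw [show (1-s) = 1 + (-s) by ring, Real.rpow_add hx1, Real.rpow_one]
    have e2 : b (n+1) = ((n:ℝ)+2) * (((n:ℝ)+2))^(-s) := by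
      simp only [hb_def]
      push_cast
      rw [show ((n:ℝ)+1+1) = (n:ℝ)+2 by ring,
        show (1-s) = 1 + (-s) by ring, Real.rpow_add hx2, Real.rpow_one]
    have e3 : a (n+1) = (((n:ℝ)+2))^(-s) := by
      simp only [ha_def]; push_cast; ring_nf
    rw [e1, e2, e3]; ring
  rw [heq] at hfinal
  rw [show (∑' n, a n) = 1 + (∑' n, a n - 1) by ring]
  exact hfinal

theorem stmt_7 (s : ℝ) (hs : 1 < s) :
    ∫ x in Set.Ioi (0 : ℝ), (Real.exp x - ↑⌊Real.exp x⌋) * Real.exp (-s * x) =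
      1 / (s - 1) - (∑' n : ℕ, ((n + 1 : ℕ) : ℝ) ^ (-s)) / s := by
  have hs0 : (0:ℝ) < s := by linarith
  have hs1 : (0:ℝ) < s - 1 := by linarith
  -- integrability of the remainder part
  have hmeas : AEStronglyMeasurable
      (fun x => (Real.exp x - (⌊Real.exp x⌋:ℝ)) * Real.exp (-s*x))
      (volume.restrict (Ioi (0:ℝ))) := by
    have heq : (fun x => (Real.exp x - (⌊Real.exp x⌋:ℝ)) * Real.exp (-s*x))
        = fun x => Int.fract (Real.exp x) * Real.exp (-s*x) := by
      funext x; rw [Int.self_sub_floor]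
    rw [heq]
    exact ((measurable_fract.comp Real.measurable_exp).mul
      (Real.measurable_exp.comp (measurable_id.const_mul (-s)))).aestronglyMeasurable
  have hr_int : IntegrableOn
      (fun x => (Real.exp x - (⌊Real.exp x⌋:ℝ)) * Real.exp (-s*x)) (Ioi (0:ℝ)) := by
    apply (exp_neg_integrableOn_Ioi 0 hs0).mono' hmeas
    filter_upwards with x
    rw [Real.norm_eq_abs, abs_mul, Real.abs_exp]
    have h1 : |Real.exp x - (⌊Real.exp x⌋:ℝ)| ≤ 1 := by
      rw [abs_of_nonneg (by linarith [Int.floor_le (Real.exp x)])]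
      linarith [Int.lt_floor_add_one (Real.exp x)]
    nlinarith [Real.exp_pos (-s*x)]
  have h1int : IntegrableOn (fun x => Real.exp (-(s-1)*x)) (Ioi (0:ℝ)) :=
    exp_neg_integrableOn_Ioi 0 hs1
  have hkey : ∀ x : ℝ, (⌊Real.exp x⌋:ℝ) * Real.exp (-s*x)
      = Real.exp (-(s-1)*x) - (Real.exp x - (⌊Real.exp x⌋:ℝ)) * Real.exp (-s*x) := by
    intro x
    have : Real.exp (-(s-1)*x) = Real.exp x * Real.exp (-s*x) := by
      rw [← Real.exp_add]; congr 1; ring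
    rw [this]; ring
  have hfint : IntegrableOn
      (fun x => (⌊Real.exp x⌋:ℝ) * Real.exp (-s*x)) (Ioi (0:ℝ)) := by
    have h := h1int.sub hr_int
    apply h.congr
    filter_upwards with x
    simp only [Pi.sub_apply]
    exact (hkey x).symm
  -- the floor integral equals Z / s
  have hper : ∀ n : ℕ, (∫ x in Ico (Real.log (n+1)) (Real.log (n+2)),
      (⌊Real.exp x⌋:ℝ) * Real.exp (-s*x))
      = ((n:ℝ)+1) * ((((n:ℝ)+1))^(-s) - (((n:ℝ)+2))^(-s)) / s := by
    intro n
    have hp1 : (0:ℝ) < (n:ℝ)+1 := by positivity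
    have hp2 : (0:ℝ) < (n:ℝ)+2 := by positivity
    have hab : Real.log (n+1) ≤ Real.log (n+2) :=
      Real.log_le_log hp1 (by linarith)
    rw [setIntegral_congr_fun measurableSet_Ico
      (g := fun x => ((n:ℝ)+1) * Real.exp (-s*x))
      (fun x hx => by rw [myfloor_7 n x hx]; push_cast; ring)]
    rw [MeasureTheory.integral_const_mul, myIco_7 s _ _ hs0 hab]
    rw [show ((n:ℝ)+1)^(-s) = Real.exp (-s * Real.log ((n:ℝ)+1)) by
        rw [Real.rpow_def_of_pos hp1]; ring_nf,
      show ((n:ℝ)+2)^(-s) = Real.exp (-s * Real.log ((n:ℝ)+2)) by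
        rw [Real.rpow_def_of_pos hp2]; ring_nf]
    ring
  have hfint' : IntegrableOn
      (fun x => (⌊Real.exp x⌋:ℝ) * Real.exp (-s*x)) (Ici (0:ℝ)) := by
    rwa [integrableOn_Ici_iff_integrableOn_Ioi]
  have hsum1 : HasSum (fun n : ℕ => ∫ x in Ico (Real.log (n+1)) (Real.log (n+2)),
      (⌊Real.exp x⌋:ℝ) * Real.exp (-s*x))
      (∫ x in Ici (0:ℝ), (⌊Real.exp x⌋:ℝ) * Real.exp (-s*x)) := by
    have := hasSum_integral_iUnion (μ := volume)
      (f := fun x => (⌊Real.exp x⌋:ℝ) * Real.exp (-s*x))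
      (fun n : ℕ => measurableSet_Ico) myDisj_7 (myUnion_7 ▸ hfint')
    rwa [myUnion_7] at this
  have hI2 : (∫ x in Ioi (0:ℝ), (⌊Real.exp x⌋:ℝ) * Real.exp (-s*x))
      = (∑' n : ℕ, ((n + 1 : ℕ) : ℝ) ^ (-s)) / s := by
    rw [← integral_Ici_eq_integral_Ioi]
    simp_rw [hper] at hsum1
    exact hsum1.unique (mysum_7 s hs)
  -- split the integral
  have hsplit : (∫ x in Ioi (0:ℝ), (Real.exp x - (⌊Real.exp x⌋:ℝ)) * Real.exp (-s*x))
      = (∫ x in Ioi (0:ℝ), Real.exp (-(s-1)*x))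
        - ∫ x in Ioi (0:ℝ), (⌊Real.exp x⌋:ℝ) * Real.exp (-s*x) := by
    rw [← integral_sub h1int hfint]
    apply setIntegral_congr_fun measurableSet_Ioi
    intro x _
    simp only
    linarith [hkey x]
  rw [hsplit, myI1_7 s hs, hI2]
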